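/- Let K ⊂ Γ be compact. Then there exist constants s₀ > 0 and b₀ > 0 such that f(s𝟙) ≥ f(μ) + b₀ for every real number s ≥ s₀ and every μ ∈ K. -/

import Mathlib

open Filter Topology

/-- The `i`-th partial derivative `fᵢ(x) = ∂f/∂λᵢ(x)`. -/
noncomputable def pd {m : ℕ} (f : (Fin m → ℝ) → ℝ) (x : Fin m → ℝ) (i : Fin m) : ℝ :=
  fderiv ℝ f x (Pi.single i 1)

/-- The Euclidean norm of a vector in `ℝ^m`. -/
noncomputable def eNorm {m : ℕ} (v : Fin m → ℝ) : ℝ :=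
  Real.sqrt (∑ i, (v i) ^ 2)

/-- The unit normal `ν_x = Df(x)/|Df(x)|`. -/
noncomputable def nuv {m : ℕ} (f : (Fin m → ℝ) → ℝ) (x : Fin m → ℝ) : Fin m → ℝ :=
  fun i => pd f x i / eNorm (pd f x)

/-- for compact `K ⊂ Γ` there are `s₀, b₀ > 0` with
`f(s·𝟙) ≥ f(μ) + b₀` for all `s ≥ s₀` and all `μ ∈ K`. -/
lemma fderiv_apply_sum {m : ℕ} (f : (Fin m → ℝ) → ℝ) (x v : Fin m → ℝ) :
    fderiv ℝ f x v = ∑ i, v i * pd f x i := by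
  have hv : v = ∑ i, v i • (Pi.single i (1:ℝ) : Fin m → ℝ) := by
    funext j
    simp [Pi.single_apply, Finset.sum_apply]
  calc fderiv ℝ f x v = fderiv ℝ f x (∑ i, v i • (Pi.single i (1:ℝ) : Fin m → ℝ)) := by rw [← hv]
    _ = ∑ i, v i * pd f x i := by
        rw [map_sum]; simp [pd, smul_eq_mul]

section
variable {m : ℕ} {Γ : Set (Fin m → ℝ)} {f : (Fin m → ℝ) → ℝ}

lemma seg_mem (hΓconv : Convex ℝ Γ) {x y : Fin m → ℝ} (hx : x ∈ Γ) (hy : y ∈ Γ)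
    {t : ℝ} (ht : t ∈ Set.Icc (0:ℝ) 1) : x + t • (y - x) ∈ Γ := by
  have h : x + t • (y - x) = (1 - t) • x + t • y := by
    funext j; simp; ring
  rw [h]
  exact hΓconv hx hy (by linarith [ht.2]) ht.1 (by ring)

lemma hasDerivAt_comp (hΓopen : IsOpen Γ)
    (hfsmooth : ContDiffOn ℝ (⊤ : ℕ∞) f Γ)
    {x y : Fin m → ℝ} (hx : x ∈ Γ) (hy : y ∈ Γ) (hΓconv : Convex ℝ Γ)
    {t : ℝ} (ht : t ∈ Set.Icc (0:ℝ) 1) :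
    HasDerivAt (fun t => f (x + t • (y - x)))
      (∑ i, (y - x) i * pd f (x + t • (y - x)) i) t := by
  have hmem := seg_mem hΓconv hx hy ht
  have hd : DifferentiableAt ℝ f (x + t • (y - x)) :=
    (hfsmooth.contDiffAt (hΓopen.mem_nhds hmem)).differentiableAt (by simp)
  have hγ : HasDerivAt (fun t : ℝ => x + t • (y - x)) (y - x) t := by
    simpa using ((hasDerivAt_id t).smul_const (y - x)).const_add x
  have := hd.hasFDerivAt.comp_hasDerivAt t hγ
  simp only [fderiv_apply_sum] at this
  exact this

lemma mono_lemma (hΓopen : IsOpen Γ) (hΓconv : Convex ℝ Γ)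
    (hfsmooth : ContDiffOn ℝ (⊤ : ℕ∞) f Γ)
    (hf1 : ∀ x ∈ Γ, ∀ i, 0 < pd f x i)
    {x y : Fin m → ℝ} (hx : x ∈ Γ) (hy : y ∈ Γ) (hxy : ∀ i, x i ≤ y i) :
    f x ≤ f y := by
  set φ : ℝ → ℝ := fun t => f (x + t • (y - x)) with hφ
  have hder : ∀ t ∈ Set.Icc (0:ℝ) 1, HasDerivAt φ
      (∑ i, (y - x) i * pd f (x + t • (y - x)) i) t :=
    fun t ht => hasDerivAt_comp hΓopen hfsmooth hx hy hΓconv ht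
  have hcont : ContinuousOn φ (Set.Icc 0 1) :=
    fun t ht => ((hder t ht).differentiableAt.continuousAt).continuousWithinAt
  have hdiff : DifferentiableOn ℝ φ (interior (Set.Icc (0:ℝ) 1)) := by
    intro t ht
    exact ((hder t (interior_subset ht)).differentiableAt).differentiableWithinAt
  have hmono : MonotoneOn φ (Set.Icc (0:ℝ) 1) := by
    apply monotoneOn_of_deriv_nonneg (convex_Icc 0 1) hcont hdiff
    intro t ht
    rw [(hder t (interior_subset ht)).deriv]
    apply Finset.sum_nonneg
    intro i _
    have hp := hf1 _ (seg_mem hΓconv hx hy (interior_subset ht)) i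
    have : 0 ≤ (y - x) i := by simpa using sub_nonneg.2 (hxy i)
    positivity
  have h01 := hmono (Set.mem_Icc.2 ⟨le_refl 0, zero_le_one⟩)
    (Set.mem_Icc.2 ⟨zero_le_one, le_refl 1⟩) zero_le_one
  simpa [hφ] using h01

lemma strict_lemma (hm : 0 < m) (hΓopen : IsOpen Γ) (hΓconv : Convex ℝ Γ)
    (hfsmooth : ContDiffOn ℝ (⊤ : ℕ∞) f Γ)
    (hf1 : ∀ x ∈ Γ, ∀ i, 0 < pd f x i)
    {x y : Fin m → ℝ} (hx : x ∈ Γ) (hy : y ∈ Γ) (hxy : ∀ i, x i < y i) :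
    f x < f y := by
  set φ : ℝ → ℝ := fun t => f (x + t • (y - x)) with hφ
  have hder : ∀ t ∈ Set.Icc (0:ℝ) 1, HasDerivAt φ
      (∑ i, (y - x) i * pd f (x + t • (y - x)) i) t :=
    fun t ht => hasDerivAt_comp hΓopen hfsmooth hx hy hΓconv ht
  have hcont : ContinuousOn φ (Set.Icc 0 1) :=
    fun t ht => ((hder t ht).differentiableAt.continuousAt).continuousWithinAt
  have hmono : StrictMonoOn φ (Set.Icc (0:ℝ) 1) := by
    apply strictMonoOn_of_deriv_pos (convex_Icc 0 1) hcont
    intro t ht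
    rw [interior_Icc] at ht
    rw [(hder t (Set.Ioo_subset_Icc_self ht)).deriv]
    apply Finset.sum_pos
    · intro i _
      have hp := hf1 _ (seg_mem hΓconv hx hy (Set.Ioo_subset_Icc_self ht)) i
      have : 0 < (y - x) i := by simpa using sub_pos.2 (hxy i)
      positivity
    · haveI : Nonempty (Fin m) := Fin.pos_iff_nonempty.mp hm
      exact Finset.univ_nonempty
  have h01 := hmono (Set.mem_Icc.2 ⟨le_refl 0, zero_le_one⟩)
    (Set.mem_Icc.2 ⟨zero_le_one, le_refl 1⟩) zero_lt_one
  simpa [hφ] using h01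
end

theorem stmt_13 (m : ℕ) (hm : 2 ≤ m)
    (Γ : Set (Fin m → ℝ)) (f : (Fin m → ℝ) → ℝ)
    (hΓopen : IsOpen Γ) (hΓconv : Convex ℝ Γ) (hΓne : Γ.Nonempty)
    (hΓproper : Γ ≠ Set.univ)
    (hΓcone : ∀ t : ℝ, 0 < t → ∀ x ∈ Γ, t • x ∈ Γ)
    (hΓperm : ∀ π : Equiv.Perm (Fin m), ∀ x ∈ Γ, x ∘ π ∈ Γ)
    (hΓpos : {x : Fin m → ℝ | ∀ i, 0 < x i} ⊆ Γ)
    (hfsmooth : ContDiffOn ℝ (⊤ : ℕ∞) f Γ)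
    (hfsymm : ∀ π : Equiv.Perm (Fin m), ∀ x ∈ Γ, f (x ∘ π) = f x)
    (hf1 : ∀ x ∈ Γ, ∀ i, 0 < pd f x i)
    (hf2 : ConcaveOn ℝ Γ f)
    (K : Set (Fin m → ℝ)) (hK : IsCompact K) (hKΓ : K ⊆ Γ) :
    ∃ s₀ : ℝ, 0 < s₀ ∧ ∃ b₀ : ℝ, 0 < b₀ ∧
      ∀ s : ℝ, s₀ ≤ s → ∀ μ ∈ K, f (fun _ => s) ≥ f μ + b₀ := by
  have hm0 : 0 < m := by omega
  rcases K.eq_empty_or_nonempty with hKe | hKne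
  · exact ⟨1, one_pos, 1, one_pos, fun s _ μ hμ => by simp [hKe] at hμ⟩
  obtain ⟨μ₀, hμ₀, hC⟩ := hK.exists_isMaxOn hKne continuous_norm.continuousOn
  set M : ℝ := max 1 ‖μ₀‖ with hMdef
  have hM1 : (1:ℝ) ≤ M := le_max_left _ _
  have hMpos : (0:ℝ) < M := lt_of_lt_of_le one_pos hM1
  have hones : ∀ r : ℝ, 0 < r → (fun _ : Fin m => r) ∈ Γ := fun r hr => hΓpos (fun _ => hr)
  have hcoord : ∀ μ ∈ K, ∀ i, μ i ≤ M := by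
    intro μ hμ i
    calc μ i ≤ |μ i| := le_abs_self _
      _ = ‖μ i‖ := rfl
      _ ≤ ‖μ‖ := norm_le_pi_norm μ i
      _ ≤ ‖μ₀‖ := hC hμ
      _ ≤ M := le_max_right _ _
  have hMΓ : (fun _ : Fin m => M) ∈ Γ := hones M hMpos
  have hM1Γ : (fun _ : Fin m => M + 1) ∈ Γ := hones _ (by linarith)
  set b₀ : ℝ := f (fun _ => M + 1) - f (fun _ => M) with hb₀
  have hb₀pos : 0 < b₀ := by
    have := strict_lemma hm0 hΓopen hΓconv hfsmooth hf1 hMΓ hM1Γ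
      (fun i => by simp)
    simpa [hb₀] using sub_pos.2 this
  refine ⟨M + 1, by linarith, b₀, hb₀pos, ?_⟩
  intro s hs μ hμ
  have hsΓ : (fun _ : Fin m => s) ∈ Γ := hones s (by linarith)
  have h1 : f μ ≤ f (fun _ => M) :=
    mono_lemma hΓopen hΓconv hfsmooth hf1 (hKΓ hμ) hMΓ (fun i => hcoord μ hμ i)
  have h2 : f (fun _ : Fin m => M + 1) ≤ f (fun _ => s) :=
    mono_lemma hΓopen hΓconv hfsmooth hf1 hM1Γ hsΓ (fun i => hs)
  have : f (fun _ : Fin m => M + 1) = f (fun _ => M) + b₀ := by rw [hb₀]; ring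
  rw [this] at h2
  linarith [h1, h2]
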